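/- Let G be a bipartite finite simple graph on n vertices with at least one edge and maximum vertex degree Δ. Then EE(G) ≥ 2cosh(√Δ) + (n − 2), with equality if and only if G is the disjoint union of a star K_{1,Δ} and n − Δ − 1 isolated vertices (in particular, if G is connected, if and only if G is the star S_n = K_{1,n−1}). -/

import Mathlib

open Finset Real

namespace EstradaIndexPaper

/-- The adjacency matrix of a simple graph over `ℝ` is Hermitian. -/
theorem adjMatrix_isHermitian {n : ℕ} (G : SimpleGraph (Fin n)) [DecidableRel G.Adj] :
    (G.adjMatrix ℝ).IsHermitian := by
  unfold Matrix.IsHermitian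
  rw [Matrix.conjTranspose_eq_transpose_of_trivial]
  exact G.isSymm_adjMatrix

/-- The eigenvalues of the adjacency matrix of `G`. -/
noncomputable def eig {n : ℕ} (G : SimpleGraph (Fin n)) [DecidableRel G.Adj] : Fin n → ℝ :=
  (adjMatrix_isHermitian G).eigenvalues

/-- The Estrada index of `G`: the sum of `e^{λ_i}` over the adjacency eigenvalues. -/
noncomputable def EE {n : ℕ} (G : SimpleGraph (Fin n)) [DecidableRel G.Adj] : ℝ :=
  ∑ i, Real.exp (eig G i)

/-- The largest adjacency eigenvalue `λ₁` of `G`. -/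
noncomputable def lam1 {n : ℕ} (G : SimpleGraph (Fin n)) [DecidableRel G.Adj] : ℝ :=
  ⨆ i, eig G i

/-- The Randić index `R(G) = Σ_{ij ∈ E(G)} (d(i)d(j))^{-1/2}`. -/
noncomputable def randic {n : ℕ} (G : SimpleGraph (Fin n)) [DecidableRel G.Adj] : ℝ :=
  ∑ e ∈ G.edgeFinset,
    Sym2.lift ⟨fun i j => (Real.sqrt ((G.degree i : ℝ) * (G.degree j : ℝ)))⁻¹,
      fun i j => by simp [mul_comm]⟩ e

/-- The general Randić index `R_{1/2}(G) = Σ_{ij ∈ E(G)} (d(i)d(j))^{1/2}`. -/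
noncomputable def randicHalf {n : ℕ} (G : SimpleGraph (Fin n)) [DecidableRel G.Adj] : ℝ :=
  ∑ e ∈ G.edgeFinset,
    Sym2.lift ⟨fun i j => Real.sqrt ((G.degree i : ℝ) * (G.degree j : ℝ)),
      fun i j => by simp [mul_comm]⟩ e


section Aux
open Matrix
-- no triangles in a 2-colorable graph
lemma no_triangle {V : Type*} {G : SimpleGraph V} (hbip : G.Colorable 2) {a b c : V}
    (hab : G.Adj a b) (hac : G.Adj a c) : ¬ G.Adj b c := by
  intro hbc
  obtain ⟨C⟩ := hbip
  have h1 : (C a).val ≠ (C b).val := fun h => C.valid hab (Fin.val_injective h)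
  have h2 : (C a).val ≠ (C c).val := fun h => C.valid hac (Fin.val_injective h)
  have h3 : (C b).val ≠ (C c).val := fun h => C.valid hbc (Fin.val_injective h)
  have := (C a).isLt; have := (C b).isLt; have := (C c).isLt
  omega

-- eigenvector of eig
lemma eigvec {n : ℕ} (G : SimpleGraph (Fin n)) [DecidableRel G.Adj] (i : Fin n) :
    ∃ u : Fin n → ℝ, u ≠ 0 ∧ G.adjMatrix ℝ *ᵥ u = eig G i • u := by
  refine ⟨⇑((adjMatrix_isHermitian G).eigenvectorBasis i), ?_, 
    (adjMatrix_isHermitian G).mulVec_eigenvectorBasis i⟩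
  intro h
  apply (adjMatrix_isHermitian G).eigenvectorBasis.orthonormal.ne_zero i
  ext j
  exact congrFun h j

-- bipartite symmetry: -μ is an eigenvalue
lemma neg_eig {n : ℕ} {G : SimpleGraph (Fin n)} [DecidableRel G.Adj] (hbip : G.Colorable 2)
    {μ : ℝ} {u : Fin n → ℝ} (hu : u ≠ 0) (hAu : G.adjMatrix ℝ *ᵥ u = μ • u) :
    ∃ w : Fin n → ℝ, w ≠ 0 ∧ G.adjMatrix ℝ *ᵥ w = (-μ) • w := by
  obtain ⟨C⟩ := hbip
  refine ⟨fun v => if C v = 0 then u v else -u v, ?_, ?_⟩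
  · intro h
    apply hu
    funext v
    have := congrFun h v
    by_cases hv : C v = 0 <;> simp [hv] at this <;> simpa using this
  · funext a
    have hAua := congrFun hAu a
    simp only [SimpleGraph.adjMatrix_mulVec_apply, Pi.smul_apply, smul_eq_mul] at hAua ⊢
    have hcol : ∀ b ∈ G.neighborFinset a, C b ≠ C a := fun b hb =>
      (C.valid (G.mem_neighborFinset a b |>.mp hb).symm)
    by_cases ha : C a = 0
    · have : ∀ b ∈ G.neighborFinset a, (if C b = 0 then u b else -u b) = -u b := by
        intro b hb
        have := hcol b hb
        rw [if_neg (by rw [ha] at this; exact this)]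
      rw [Finset.sum_congr rfl this, Finset.sum_neg_distrib, hAua, if_pos ha]
      ring
    · have : ∀ b ∈ G.neighborFinset a, (if C b = 0 then u b else -u b) = u b := by
        intro b hb
        have hb' := hcol b hb
        have : C b = 0 := by omega
        rw [if_pos this]
      rw [Finset.sum_congr rfl this, hAua, if_neg ha]
      ring

theorem rayleigh_le {m : Type*} [Fintype m] [DecidableEq m] {A : Matrix m m ℝ}
    (hA : A.IsHermitian) {c : ℝ} (hc : ∀ i, hA.eigenvalues i ≤ c) (x : m → ℝ) :
    x ⬝ᵥ (A *ᵥ x) ≤ c * (x ⬝ᵥ x) := by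
  set U := (hA.eigenvectorUnitary : Matrix m m ℝ) with hU
  have hUUs : U * star U = 1 := (Matrix.mem_unitaryGroup_iff).mp (hA.eigenvectorUnitary).2
  have hT : Uᵀ = star U := by
    simp [hU, Matrix.star_eq_conjTranspose, Matrix.conjTranspose_eq_transpose_of_trivial]
  set y := star U *ᵥ x with hy
  have hUy : U *ᵥ y = x := by
    rw [hy, Matrix.mulVec_mulVec, hUUs, Matrix.one_mulVec]
  have hxx : x ⬝ᵥ x = y ⬝ᵥ y := by
    nth_rewrite 2 [← hUy]
    rw [Matrix.dotProduct_mulVec, ← Matrix.mulVec_transpose, hT, ← hy]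
  have hAx : x ⬝ᵥ (A *ᵥ x) = ∑ i, hA.eigenvalues i * (y i)^2 := by
    nth_rewrite 1 [hA.spectral_theorem]
    rw [Unitary.conjStarAlgAut_apply]
    rw [← Matrix.mulVec_mulVec, ← Matrix.mulVec_mulVec, Matrix.dotProduct_mulVec (v := x),
      ← Matrix.mulVec_transpose, hT, ← hy]
    simp only [Matrix.mulVec_diagonal, dotProduct, Function.comp_apply, RCLike.ofReal_real_eq_id,
      id_eq]
    exact Finset.sum_congr rfl fun i _ => by ring
  rw [hAx, hxx]
  have : c * (y ⬝ᵥ y) = ∑ i, c * (y i)^2 := by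
    simp [dotProduct, Finset.mul_sum, sq]
  rw [this]
  exact Finset.sum_le_sum fun i _ => by nlinarith [hc i, sq_nonneg (y i)]

theorem sqrt_maxDegree_le {n : ℕ} {G : SimpleGraph (Fin n)} [DecidableRel G.Adj]
    (hbip : G.Colorable 2) (hG : G.edgeFinset.Nonempty) {c : ℝ}
    (hc : ∀ i, eig G i ≤ c) : Real.sqrt (G.maxDegree : ℝ) ≤ c := by
  classical
  obtain ⟨e, he⟩ := hG
  rw [SimpleGraph.mem_edgeFinset] at he
  induction e with
  | _ a b =>
  have hab : G.Adj a b := he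
  have hne : Nonempty (Fin n) := ⟨a⟩
  obtain ⟨v0, hv0⟩ := G.exists_maximal_degree_vertex
  set Δ : ℕ := G.maxDegree with hΔdef
  have hΔ1 : 1 ≤ Δ := by
    have : 0 < G.degree a := by
      rw [G.degree_pos_iff_exists_adj]
      exact ⟨b, hab⟩
    have := G.degree_le_maxDegree a
    omega
  set s := G.neighborFinset v0 with hs
  have hscard : s.card = Δ := by rw [hs, G.card_neighborFinset_eq_degree, ← hv0]
  have hv0s : v0 ∉ s := by simp [hs]
  set sq := Real.sqrt (Δ : ℝ) with hsq
  have hsqsq : sq * sq = (Δ : ℝ) := Real.mul_self_sqrt (by positivity)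
  have hsqpos : 0 < sq := Real.sqrt_pos.mpr (by exact_mod_cast hΔ1)
  set x : Fin n → ℝ := fun u => if u = v0 then sq else if u ∈ s then 1 else 0 with hx
  have hxv0 : x v0 = sq := by simp [hx]
  have hxs : ∀ u ∈ s, x u = 1 := by
    intro u hu
    have : u ≠ v0 := fun h => hv0s (h ▸ hu)
    simp [hx, this, hu]
  have hxout : ∀ u, u ∉ insert v0 s → x u = 0 := by
    intro u hu
    simp only [Finset.mem_insert, not_or] at hu
    simp [hx, hu.1, hu.2]
  -- (A x) v0 = Δ
  have hAxv0 : (G.adjMatrix ℝ *ᵥ x) v0 = (Δ : ℝ) := by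
    rw [SimpleGraph.adjMatrix_mulVec_apply]
    rw [Finset.sum_congr rfl (fun w hw => hxs w hw)]
    simp [hscard]
  -- (A x) u = sq for u in s
  have hAxs : ∀ u ∈ s, (G.adjMatrix ℝ *ᵥ x) u = sq := by
    intro u hu
    rw [SimpleGraph.adjMatrix_mulVec_apply]
    have hv0mem : v0 ∈ G.neighborFinset u := by
      rw [SimpleGraph.mem_neighborFinset]
      exact ((G.mem_neighborFinset v0 u).mp hu).symm
    rw [Finset.sum_eq_single_of_mem v0 hv0mem, hxv0]
    intro w hw hwne
    have hadj_uw : G.Adj u w := (G.mem_neighborFinset u w).mp hw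
    have hadj_v0u : G.Adj v0 u := (G.mem_neighborFinset v0 u).mp hu
    have hws : w ∉ s := by
      intro hws
      exact no_triangle hbip hadj_v0u ((G.mem_neighborFinset v0 w).mp hws) hadj_uw
    simp [hx, hwne, hws]
  -- dot products
  have hdot1 : x ⬝ᵥ x = 2 * (Δ : ℝ) := by
    rw [dotProduct, ← Finset.sum_subset (Finset.subset_univ (insert v0 s))
      (fun u _ hu => by rw [hxout u hu]; ring)]
    rw [Finset.sum_insert hv0s, hxv0]
    rw [Finset.sum_congr rfl (fun u hu => by rw [hxs u hu])]
    simp [hscard, hsqsq]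
    ring
  have hdot2 : x ⬝ᵥ (G.adjMatrix ℝ *ᵥ x) = 2 * (Δ : ℝ) * sq := by
    rw [dotProduct, ← Finset.sum_subset (Finset.subset_univ (insert v0 s))
      (fun u _ hu => by rw [hxout u hu]; ring)]
    rw [Finset.sum_insert hv0s, hxv0, hAxv0]
    rw [Finset.sum_congr rfl (fun u hu => by rw [hxs u hu, hAxs u hu])]
    simp [hscard]
    ring
  have hray := rayleigh_le (adjMatrix_isHermitian G) (c := c) hc x
  rw [hdot1, hdot2] at hray
  have hΔpos : (0 : ℝ) < (Δ : ℝ) := by exact_mod_cast hΔ1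
  nlinarith

theorem trace_eq_sum_eig {m : Type*} [Fintype m] [DecidableEq m] {A : Matrix m m ℝ}
    (hA : A.IsHermitian) : A.trace = ∑ i, hA.eigenvalues i := by
  nth_rewrite 1 [hA.spectral_theorem]
  rw [Unitary.conjStarAlgAut_apply]
  rw [Matrix.trace_mul_cycle, Unitary.coe_star_mul_self, Matrix.one_mul, Matrix.trace_diagonal]
  simp

theorem trace_sq_eq_sum_eig_sq {m : Type*} [Fintype m] [DecidableEq m] {A : Matrix m m ℝ}
    (hA : A.IsHermitian) : (A * A).trace = ∑ i, hA.eigenvalues i ^ 2 := by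
  nth_rewrite 1 2 [hA.spectral_theorem]
  rw [Unitary.conjStarAlgAut_apply]
  rw [Matrix.trace_mul_cycle]
  simp only [Matrix.mul_assoc]
  rw [← Matrix.mul_assoc (star (hA.eigenvectorUnitary : Matrix m m ℝ))
    (hA.eigenvectorUnitary : Matrix m m ℝ), Unitary.coe_star_mul_self, Matrix.one_mul]
  simp only [← Matrix.mul_assoc]
  rw [Matrix.trace_mul_cycle, ← Matrix.mul_assoc, Unitary.coe_star_mul_self, Matrix.one_mul,
    Matrix.diagonal_mul_diagonal, Matrix.trace_diagonal]
  simp [sq]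

theorem sum_eig_eq_zero {n : ℕ} (G : SimpleGraph (Fin n)) [DecidableRel G.Adj] :
    ∑ i, eig G i = 0 := by
  unfold eig
  rw [← trace_eq_sum_eig (adjMatrix_isHermitian G), SimpleGraph.trace_adjMatrix]

theorem sum_eig_sq {n : ℕ} (G : SimpleGraph (Fin n)) [DecidableRel G.Adj] :
    ∑ i, eig G i ^ 2 = ∑ v, (G.degree v : ℝ) := by
  unfold eig
  rw [← trace_sq_eq_sum_eig_sq (adjMatrix_isHermitian G), Matrix.trace]
  congr 1
  funext i
  exact G.adjMatrix_mul_self_apply_self i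

theorem eig_realized {m : Type*} [Fintype m] [DecidableEq m] {A : Matrix m m ℝ}
    (hA : A.IsHermitian) {μ : ℝ} {v : m → ℝ} (hv : v ≠ 0) (hAv : A *ᵥ v = μ • v) :
    ∃ i, hA.eigenvalues i = μ := by
  have hdet : (A - μ • (1 : Matrix m m ℝ)).det = 0 := by
    rw [← Matrix.exists_mulVec_eq_zero_iff]
    exact ⟨v, hv, by rw [Matrix.sub_mulVec, hAv, Matrix.smul_mulVec, Matrix.one_mulVec, sub_self]⟩
  have hUUs : (hA.eigenvectorUnitary : Matrix m m ℝ) * (star (hA.eigenvectorUnitary : Matrix m m ℝ)) = 1 :=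
    (Matrix.mem_unitaryGroup_iff).mp (hA.eigenvectorUnitary).2
  have hconj : A - μ • (1 : Matrix m m ℝ) =
      (hA.eigenvectorUnitary : Matrix m m ℝ) *
        (Matrix.diagonal (RCLike.ofReal ∘ hA.eigenvalues) - μ • 1) *
        (star (hA.eigenvectorUnitary : Matrix m m ℝ)) := by
    rw [Matrix.mul_sub, Matrix.sub_mul]
    nth_rewrite 1 [hA.spectral_theorem]
    congr 1
    rw [Matrix.mul_smul, Matrix.mul_one, Matrix.smul_mul, hUUs]
  rw [hconj, Matrix.det_mul, Matrix.det_mul, mul_comm, ← mul_assoc, ← Matrix.det_mul,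
    Unitary.coe_star_mul_self, Matrix.det_one, one_mul] at hdet
  have hd : Matrix.diagonal (RCLike.ofReal ∘ hA.eigenvalues) - μ • (1 : Matrix m m ℝ) =
      Matrix.diagonal (fun i => hA.eigenvalues i - μ) := by
    rw [Matrix.smul_one_eq_diagonal, ← Matrix.diagonal_sub]
    congr 1
  rw [hd, Matrix.det_diagonal] at hdet
  obtain ⟨i, -, hi⟩ := Finset.prod_eq_zero_iff.mp hdet
  exact ⟨i, by linarith [sub_eq_zero.mp hi]⟩

theorem eig_realized'
 {n : ℕ} (G : SimpleGraph (Fin n)) [DecidableRel G.Adj] {μ : ℝ}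
    {v : Fin n → ℝ} (hv : v ≠ 0) (hAv : G.adjMatrix ℝ *ᵥ v = μ • v) : ∃ i, eig G i = μ := by
  unfold eig
  exact eig_realized (adjMatrix_isHermitian G) hv hAv

theorem main_core {n : ℕ} (G : SimpleGraph (Fin n)) [DecidableRel G.Adj]
    (hbip : G.Colorable 2) (hG : G.edgeFinset.Nonempty) :
    EE G ≥ 2 * Real.cosh (Real.sqrt (G.maxDegree : ℝ)) + ((n : ℝ) - 2) ∧
    (EE G = 2 * Real.cosh (Real.sqrt (G.maxDegree : ℝ)) + ((n : ℝ) - 2) →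
      ∃ i0 j0 : Fin n, i0 ≠ j0 ∧ eig G i0 = Real.sqrt (G.maxDegree : ℝ) ∧
        eig G j0 = -Real.sqrt (G.maxDegree : ℝ) ∧ ∀ k, k ≠ i0 → k ≠ j0 → eig G k = 0) := by
  classical
  obtain ⟨e, he⟩ := hG
  have hG' : G.edgeFinset.Nonempty := ⟨e, he⟩
  rw [SimpleGraph.mem_edgeFinset] at he
  have hne : Nonempty (Fin n) := by
    induction e with
    | _ a b => exact ⟨a⟩
  have hΔ1 : 1 ≤ G.maxDegree := by
    induction e with
    | _ a b =>
      have : 0 < G.degree a := by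
        rw [G.degree_pos_iff_exists_adj]; exact ⟨b, he⟩
      have := G.degree_le_maxDegree a
      omega
  set Δ : ℕ := G.maxDegree with hΔdef
  set sq := Real.sqrt (Δ : ℝ) with hsq
  have hsqpos : 0 < sq := Real.sqrt_pos.mpr (by exact_mod_cast hΔ1)
  obtain ⟨i0, hc⟩ := Finite.exists_max (eig G)
  have hM : sq ≤ eig G i0 := sqrt_maxDegree_le hbip hG' hc
  obtain ⟨u, hu0, hAu⟩ := eigvec G i0
  obtain ⟨w, hw0, hAw⟩ := neg_eig hbip hu0 hAu
  obtain ⟨j0, hj0⟩ := eig_realized' G hw0 hAw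
  have hij : i0 ≠ j0 := by
    intro h
    rw [← h] at hj0
    have : eig G i0 > 0 := lt_of_lt_of_le hsqpos hM
    linarith
  -- decompositions
  have hj0mem : j0 ∈ Finset.univ.erase i0 := Finset.mem_erase.mpr ⟨Ne.symm hij, Finset.mem_univ _⟩
  set rest := (Finset.univ.erase i0).erase j0 with hrest
  have hdecomp : ∀ f : Fin n → ℝ, ∑ k, f k = f i0 + (f j0 + ∑ k ∈ rest, f k) := by
    intro f
    rw [← Finset.add_sum_erase _ f (Finset.mem_univ i0), ← Finset.add_sum_erase _ f hj0mem]
  have hn2 : 2 ≤ n := by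
    have := Fintype.card_le_of_injective (fun b : Fin 2 => if b = 0 then i0 else j0)
      (by intro a b hab; fin_cases a <;> fin_cases b <;> simp_all)
    simpa using this
  have hcard : (rest.card : ℝ) = (n : ℝ) - 2 := by
    rw [hrest, Finset.card_erase_of_mem hj0mem, Finset.card_erase_of_mem (Finset.mem_univ i0)]
    simp only [Finset.card_univ, Fintype.card_fin]
    have : n - 1 - 1 = n - 2 := by omega
    rw [this, Nat.cast_sub hn2]
    norm_num
  have hrestsum : ∑ k ∈ rest, eig G k = 0 := by
    have h0 := sum_eig_eq_zero G
    rw [hdecomp (eig G), hj0] at h0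
    linarith
  have hR : ∑ k ∈ rest, Real.exp (eig G k) ≥ (n : ℝ) - 2 := by
    have h1 : ∀ k ∈ rest, 1 + eig G k ≤ Real.exp (eig G k) := fun k _ => by
      have := Real.add_one_le_exp (eig G k); linarith
    calc ∑ k ∈ rest, Real.exp (eig G k) ≥ ∑ k ∈ rest, (1 + eig G k) := Finset.sum_le_sum h1
    _ = rest.card + ∑ k ∈ rest, eig G k := by rw [Finset.sum_add_distrib]; simp
    _ = (n : ℝ) - 2 := by rw [hrestsum, hcard]; ring
  have hEE : EE G = Real.exp (eig G i0) + (Real.exp (eig G j0) + ∑ k ∈ rest, Real.exp (eig G k)) :=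
    hdecomp _
  have hcosh : Real.exp (eig G i0) + Real.exp (eig G j0) = 2 * Real.cosh (eig G i0) := by
    rw [hj0, Real.cosh_eq]; ring
  have hcoshmono : Real.cosh sq ≤ Real.cosh (eig G i0) := by
    rw [Real.cosh_le_cosh]
    rw [abs_of_pos hsqpos, abs_of_pos (lt_of_lt_of_le hsqpos hM)]
    exact hM
  constructor
  · rw [hEE]; linarith
  · intro heq
    rw [hEE] at heq
    have hRexact : ∑ k ∈ rest, Real.exp (eig G k) = (n : ℝ) - 2 := by linarith
    have hcoshexact : Real.cosh (eig G i0) = Real.cosh sq := by linarith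
    have hMexact : eig G i0 = sq := by
      by_contra hne'
      have : sq < eig G i0 := lt_of_le_of_ne hM (Ne.symm hne')
      have : Real.cosh sq < Real.cosh (eig G i0) := by
        rw [Real.cosh_lt_cosh, abs_of_pos hsqpos, abs_of_pos (lt_of_lt_of_le hsqpos hM)]
        exact this
      linarith
    refine ⟨i0, j0, hij, hMexact, by rw [hj0, hMexact], ?_⟩
    intro k hki hkj
    have hkmem : k ∈ rest := Finset.mem_erase.mpr ⟨hkj, Finset.mem_erase.mpr ⟨hki, Finset.mem_univ _⟩⟩
    have hsum2 : ∑ k ∈ rest, (1 + eig G k) = ∑ k ∈ rest, Real.exp (eig G k) := by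
      rw [hRexact, Finset.sum_add_distrib]
      simp [hrestsum, hcard]
    have hptwise := (Finset.sum_eq_sum_iff_of_le
      (fun k _ => by linarith [Real.add_one_le_exp (eig G k)])).mp hsum2 k hkmem
    by_contra hk0
    have := Real.add_one_lt_exp hk0
    linarith [hptwise]

def StarAt {n : ℕ} (G : SimpleGraph (Fin n)) [DecidableRel G.Adj] (v0 : Fin n) : Prop :=
  G.degree v0 = G.maxDegree ∧ ∀ a b, G.Adj a b → a = v0 ∨ b = v0

theorem sum_degree_eq {n : ℕ} (G : SimpleGraph (Fin n)) [DecidableRel G.Adj]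
    {i0 j0 : Fin n} (hij : i0 ≠ j0) (hi : eig G i0 = Real.sqrt (G.maxDegree : ℝ))
    (hj : eig G j0 = -Real.sqrt (G.maxDegree : ℝ))
    (hz : ∀ k, k ≠ i0 → k ≠ j0 → eig G k = 0) :
    ∑ v, G.degree v = 2 * G.maxDegree := by
  have hcast : (∑ v, (G.degree v : ℝ)) = 2 * (G.maxDegree : ℝ) := by
    rw [← sum_eig_sq G]
    have hj0mem : j0 ∈ Finset.univ.erase i0 :=
      Finset.mem_erase.mpr ⟨Ne.symm hij, Finset.mem_univ _⟩
    rw [← Finset.add_sum_erase _ _ (Finset.mem_univ i0), ← Finset.add_sum_erase _ _ hj0mem]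
    have hrest : ∀ k ∈ (Finset.univ.erase i0).erase j0, eig G k ^ 2 = 0 := by
      intro k hk
      rw [Finset.mem_erase, Finset.mem_erase] at hk
      rw [hz k hk.2.1 hk.1]; ring
    rw [Finset.sum_congr rfl hrest, Finset.sum_const_zero, hi, hj]
    rw [neg_pow, Real.sq_sqrt (by positivity)]
    ring
  have : ((∑ v, G.degree v : ℕ) : ℝ) = ((2 * G.maxDegree : ℕ) : ℝ) := by
    push_cast
    rw [← hcast]
  exact_mod_cast this

theorem starAt_of_sum_degree {n : ℕ} (G : SimpleGraph (Fin n)) [DecidableRel G.Adj]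
    (hG : G.edgeFinset.Nonempty) (hsum : ∑ v, G.degree v = 2 * G.maxDegree) :
    ∃ v0, StarAt G v0 := by
  classical
  have hne : Nonempty (Fin n) := by
    obtain ⟨e, he⟩ := hG
    rw [SimpleGraph.mem_edgeFinset] at he
    induction e with
    | _ a b => exact ⟨a⟩
  obtain ⟨v0, hv0⟩ := G.exists_maximal_degree_vertex
  refine ⟨v0, hv0.symm, ?_⟩
  set Δ := G.maxDegree with hΔ
  set s := G.neighborFinset v0 with hs
  have hscard : s.card = Δ := by rw [hs, G.card_neighborFinset_eq_degree, ← hv0]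
  have hv0s : v0 ∉ s := by simp [hs]
  -- sum over erase v0 equals Δ
  have h1 : ∑ v ∈ Finset.univ.erase v0, G.degree v = Δ := by
    have h := Finset.add_sum_erase Finset.univ (fun v => G.degree v) (Finset.mem_univ v0)
    rw [hsum] at h
    omega
  have hdegs : ∀ v ∈ s, 1 ≤ G.degree v := by
    intro v hv
    have : G.Adj v v0 := ((G.mem_neighborFinset v0 v).mp hv).symm
    have : 0 < G.degree v := by rw [G.degree_pos_iff_exists_adj]; exact ⟨v0, this⟩
    omega
  have hssub : s ⊆ Finset.univ.erase v0 := by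
    intro v hv
    exact Finset.mem_erase.mpr ⟨fun h => hv0s (h ▸ hv), Finset.mem_univ _⟩
  have hsum_s_le : ∑ v ∈ s, G.degree v ≤ Δ := by
    rw [← h1]
    exact Finset.sum_le_sum_of_subset hssub
  have hsum_s_ge : Δ ≤ ∑ v ∈ s, G.degree v := by
    calc Δ = ∑ _v ∈ s, 1 := by rw [Finset.sum_const, hscard]; ring
    _ ≤ ∑ v ∈ s, G.degree v := Finset.sum_le_sum hdegs
  intro a b hab
  by_contra hcon
  push_neg at hcon
  obtain ⟨hav0, hbv0⟩ := hcon
  by_cases has : a ∈ s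
  · -- a has degree ≥ 2
    have h2 : 2 ≤ G.degree a := by
      have hsub : {v0, b} ⊆ G.neighborFinset a := by
        intro x hx
        rcases Finset.mem_insert.mp hx with h | h
        · rw [h]; exact (G.mem_neighborFinset a v0).mpr ((G.mem_neighborFinset v0 a).mp has).symm
        · rw [Finset.mem_singleton] at h; rw [h]; exact (G.mem_neighborFinset a b).mpr hab
      have := Finset.card_le_card hsub
      rw [Finset.card_pair (by intro h; exact hbv0 h.symm)] at this
      rw [← G.card_neighborFinset_eq_degree]
      omega
    have : ∑ v ∈ s, G.degree v = G.degree a + ∑ v ∈ s.erase a, G.degree v :=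
      (Finset.add_sum_erase _ _ has).symm
    have hge : Δ - 1 ≤ ∑ v ∈ s.erase a, G.degree v := by
      have hle : ∑ _v ∈ s.erase a, 1 ≤ ∑ v ∈ s.erase a, G.degree v :=
        Finset.sum_le_sum (fun v hv => hdegs v (Finset.mem_of_mem_erase hv))
      rw [Finset.sum_const, smul_eq_mul, mul_one, Finset.card_erase_of_mem has, hscard] at hle
      exact hle
    have hΔ1 : 1 ≤ Δ := by
      have := hdegs a has
      have := G.degree_le_maxDegree a
      omega
    omega
  · -- a not adjacent to v0, but degree ≥ 1
    have h1a : 1 ≤ G.degree a := by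
      have : 0 < G.degree a := by rw [G.degree_pos_iff_exists_adj]; exact ⟨b, hab⟩
      omega
    have hasub : insert a s ⊆ Finset.univ.erase v0 := by
      intro x hx
      rcases Finset.mem_insert.mp hx with h | h
      · subst h; exact Finset.mem_erase.mpr ⟨hav0, Finset.mem_univ _⟩
      · exact hssub h
    have : ∑ v ∈ insert a s, G.degree v ≤ Δ := by
      rw [← h1]
      exact Finset.sum_le_sum_of_subset hasub
    rw [Finset.sum_insert has] at this
    omega


theorem neighborFinset_of_starAt {n : ℕ} {G : SimpleGraph (Fin n)} [DecidableRel G.Adj]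
    {v0 a : Fin n} (hstar : StarAt G v0) (ha : a ≠ v0) :
    G.neighborFinset a = if G.Adj v0 a then {v0} else ∅ := by
  split_ifs with h
  · ext c
    simp only [SimpleGraph.mem_neighborFinset, Finset.mem_singleton]
    constructor
    · intro hac
      rcases hstar.2 a c hac with h1 | h1
      · exact absurd h1 ha
      · exact h1
    · intro h1; rw [h1]; exact h.symm
  · ext c
    simp only [SimpleGraph.mem_neighborFinset, Finset.notMem_empty, iff_false]
    intro hac
    rcases hstar.2 a c hac with h1 | h1
    · exact ha h1
    · rw [h1] at hac; exact h (hac.symm)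

theorem cube_eq_of_starAt {n : ℕ} {G : SimpleGraph (Fin n)} [DecidableRel G.Adj]
    {v0 : Fin n} (hstar : StarAt G v0) (x : Fin n → ℝ) :
    G.adjMatrix ℝ *ᵥ (G.adjMatrix ℝ *ᵥ (G.adjMatrix ℝ *ᵥ x)) =
      (G.maxDegree : ℝ) • (G.adjMatrix ℝ *ᵥ x) := by
  classical
  set Δ := G.maxDegree with hΔ
  have hdegv0 : (G.neighborFinset v0).card = Δ := by
    rw [G.card_neighborFinset_eq_degree, hstar.1]
  have hmemN : ∀ b ∈ G.neighborFinset v0, b ≠ v0 := by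
    intro b hb h
    rw [h] at hb
    exact G.notMem_neighborFinset_self v0 hb
  have hNb : ∀ b ∈ G.neighborFinset v0, G.neighborFinset b = {v0} := by
    intro b hb
    rw [neighborFinset_of_starAt hstar (hmemN b hb),
      if_pos ((G.mem_neighborFinset v0 b).mp hb)]
  funext a
  simp only [Pi.smul_apply, smul_eq_mul, SimpleGraph.adjMatrix_mulVec_apply]
  by_cases ha : a = v0
  · subst ha
    have hb : ∀ b ∈ G.neighborFinset a, (∑ c ∈ G.neighborFinset b, ∑ u ∈ G.neighborFinset c, x u)
        = ∑ u ∈ G.neighborFinset a, x u := by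
      intro b hb
      rw [hNb b hb, Finset.sum_singleton]
    rw [Finset.sum_congr rfl hb, Finset.sum_const, hdegv0, nsmul_eq_mul]
  · rw [neighborFinset_of_starAt hstar ha]
    by_cases hadj : G.Adj v0 a
    · rw [if_pos hadj, Finset.sum_singleton, Finset.sum_singleton]
      have hb : ∀ b ∈ G.neighborFinset v0, (∑ u ∈ G.neighborFinset b, x u) = x v0 := by
        intro b hb
        rw [hNb b hb, Finset.sum_singleton]
      rw [Finset.sum_congr rfl hb, Finset.sum_const, hdegv0, nsmul_eq_mul]
    · rw [if_neg hadj]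
      simp

theorem eig_mem_of_starAt {n : ℕ} {G : SimpleGraph (Fin n)} [DecidableRel G.Adj]
    {v0 : Fin n} (hstar : StarAt G v0) (i : Fin n) :
    eig G i = 0 ∨ eig G i = Real.sqrt (G.maxDegree : ℝ) ∨
      eig G i = -Real.sqrt (G.maxDegree : ℝ) := by
  obtain ⟨u, hu0, hAu⟩ := eigvec G i
  set lam := eig G i with hlam
  have hcube : G.adjMatrix ℝ *ᵥ (G.adjMatrix ℝ *ᵥ (G.adjMatrix ℝ *ᵥ u)) = (lam ^ 3) • u := by
    simp only [hAu, Matrix.mulVec_smul, smul_smul]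
    congr 1
    ring
  have h3 : lam ^ 3 • u = ((G.maxDegree : ℝ) * lam) • u := by
    rw [← hcube, cube_eq_of_starAt hstar u, hAu, smul_smul]
  obtain ⟨a, ha⟩ := Function.ne_iff.mp hu0
  have ha' : (u a : ℝ) ≠ 0 := ha
  have heq : lam ^ 3 = (G.maxDegree : ℝ) * lam := by
    have := congrFun h3 a
    simp only [Pi.smul_apply, smul_eq_mul] at this
    exact mul_right_cancel₀ ha' this
  rcases eq_or_ne lam 0 with h | h
  · exact Or.inl h
  · have hsq : lam ^ 2 = (G.maxDegree : ℝ) := by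
      have h0 : lam * (lam ^ 2 - (G.maxDegree : ℝ)) = 0 := by ring_nf; linarith [heq]
      rcases mul_eq_zero.mp h0 with h' | h'
      · exact absurd h' h
      · linarith
    have habs : |lam| = Real.sqrt (G.maxDegree : ℝ) := by
      rw [← Real.sqrt_sq_eq_abs, hsq]
    rcases (abs_eq (Real.sqrt_nonneg (G.maxDegree : ℝ))).mp habs with h' | h'
    · exact Or.inr (Or.inl h')
    · exact Or.inr (Or.inr h')

theorem EE_eq_of_starAt {n : ℕ} {G : SimpleGraph (Fin n)} [DecidableRel G.Adj]
    (hG : G.edgeFinset.Nonempty) {v0 : Fin n} (hstar : StarAt G v0) :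
    EE G = 2 * Real.cosh (Real.sqrt (G.maxDegree : ℝ)) + ((n : ℝ) - 2) := by
  classical
  set Δ := G.maxDegree with hΔdef
  have hΔ1 : 1 ≤ Δ := by
    obtain ⟨e, he⟩ := hG
    rw [SimpleGraph.mem_edgeFinset] at he
    induction e with
    | _ a b =>
      have : 0 < G.degree a := by rw [G.degree_pos_iff_exists_adj]; exact ⟨b, he⟩
      have := G.degree_le_maxDegree a
      omega
  set sq := Real.sqrt (Δ : ℝ) with hsq
  have hsqpos : 0 < sq := Real.sqrt_pos.mpr (by exact_mod_cast hΔ1)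
  have hsqsq : sq ^ 2 = (Δ : ℝ) := Real.sq_sqrt (by positivity)
  -- sum of degrees is 2Δ
  have hdegsum : ∑ v, (G.degree v : ℝ) = 2 * (Δ : ℝ) := by
    have hdegv0 : (G.neighborFinset v0).card = Δ := by
      rw [G.card_neighborFinset_eq_degree, hstar.1]
    have hv0s : v0 ∉ G.neighborFinset v0 := G.notMem_neighborFinset_self v0
    have hmemN : ∀ b ∈ G.neighborFinset v0, b ≠ v0 := by
      intro b hb h; rw [h] at hb; exact hv0s hb
    have hout : ∀ a ∈ Finset.univ, a ∉ insert v0 (G.neighborFinset v0) → (G.degree a : ℝ) = 0 := by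
      intro a _ ha
      simp only [Finset.mem_insert, not_or] at ha
      rw [← G.card_neighborFinset_eq_degree, neighborFinset_of_starAt hstar ha.1, if_neg]
      · simp
      · intro h; exact ha.2 ((G.mem_neighborFinset v0 a).mpr h)
    rw [← Finset.sum_subset (Finset.subset_univ (insert v0 (G.neighborFinset v0))) hout,
      Finset.sum_insert hv0s]
    have hN1 : ∀ a ∈ G.neighborFinset v0, (G.degree a : ℝ) = 1 := by
      intro a ha
      rw [← G.card_neighborFinset_eq_degree, neighborFinset_of_starAt hstar (hmemN a ha),
        if_pos ((G.mem_neighborFinset v0 a).mp ha)]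
      simp
    rw [Finset.sum_congr rfl hN1, Finset.sum_const, hdegv0, ← G.card_neighborFinset_eq_degree,
      hdegv0]
    simp
    ring
  -- counting eigenvalues
  set P := Finset.univ.filter (fun i => eig G i = sq) with hP
  set Q := Finset.univ.filter (fun i => eig G i = -sq) with hQ
  have hdisj : Disjoint P Q := by
    rw [Finset.disjoint_left]
    intro i hiP hiQ
    rw [hP, Finset.mem_filter] at hiP
    rw [hQ, Finset.mem_filter] at hiQ
    rw [hiP.2] at hiQ
    linarith [hiQ.2]
  have hz : ∀ i ∈ (P ∪ Q)ᶜ, eig G i = 0 := by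
    intro i hi
    rw [Finset.mem_compl, Finset.mem_union, hP, hQ, Finset.mem_filter, Finset.mem_filter] at hi
    push_neg at hi
    rcases eig_mem_of_starAt hstar i with h | h | h
    · exact h
    · exact absurd h (hi.1 (Finset.mem_univ i))
    · exact absurd h (hi.2 (Finset.mem_univ i))
  have hsplit : ∀ f : ℝ → ℝ, ∑ i, f (eig G i) =
      P.card • f sq + Q.card • f (-sq) + (P ∪ Q)ᶜ.card • f 0 := by
    intro f
    rw [← Finset.sum_add_sum_compl (P ∪ Q), Finset.sum_union hdisj]
    congr 1
    · congr 1
      · rw [Finset.sum_congr rfl (fun i hi => by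
          rw [(Finset.mem_filter.mp hi).2]), Finset.sum_const]
      · rw [Finset.sum_congr rfl (fun i hi => by
          rw [(Finset.mem_filter.mp hi).2]), Finset.sum_const]
    · rw [Finset.sum_congr rfl (fun i hi => by rw [hz i hi]), Finset.sum_const]
  have hcards : P.card + Q.card + (P ∪ Q)ᶜ.card = n := by
    rw [← Finset.card_union_of_disjoint hdisj]
    have := Finset.card_add_card_compl (P ∪ Q)
    simp only [Fintype.card_fin] at this
    omega
  have h1 := hsplit (fun t => t)
  rw [sum_eig_eq_zero G] at h1
  simp only [nsmul_eq_mul, smul_eq_mul] at h1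
  have h2 := hsplit (fun t => t ^ 2)
  rw [sum_eig_sq G, hdegsum] at h2
  simp only [nsmul_eq_mul, smul_eq_mul, neg_sq, hsqsq] at h2
  have hpq : (P.card : ℝ) = Q.card := by
    have : ((P.card : ℝ) - Q.card) * sq = 0 := by linarith [h1]
    rcases mul_eq_zero.mp this with h | h
    · linarith
    · linarith
  have hΔR : (0:ℝ) < (Δ : ℝ) := by exact_mod_cast hΔ1
  have hpq2 : (P.card : ℝ) + Q.card = 2 := by
    have h2' : ((P.card : ℝ) + Q.card) * (Δ : ℝ) = 2 * (Δ : ℝ) := by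
      ring_nf
      ring_nf at h2
      linarith [h2]
    exact mul_right_cancel₀ (ne_of_gt hΔR) h2'
  have hp1 : (P.card : ℝ) = 1 := by linarith
  have hq1 : (Q.card : ℝ) = 1 := by linarith
  have hn2 : 2 ≤ n := by
    have : ((P.card + Q.card : ℕ) : ℝ) = 2 := by push_cast; linarith
    have h22 : P.card + Q.card = 2 := by exact_mod_cast this
    omega
  have hrc : (((P ∪ Q)ᶜ.card : ℕ) : ℝ) = (n : ℝ) - 2 := by
    have h22 : P.card + Q.card = 2 := by
      have : ((P.card + Q.card : ℕ) : ℝ) = 2 := by push_cast; linarith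
      exact_mod_cast this
    have : (P ∪ Q)ᶜ.card = n - 2 := by omega
    rw [this, Nat.cast_sub hn2]
    norm_num
  have h3 := hsplit Real.exp
  unfold EE
  rw [h3]
  simp only [nsmul_eq_mul, Real.exp_zero, mul_one, hp1, hq1, hrc]
  rw [Real.cosh_eq]
  ring

theorem iso_of_starAt {n : ℕ} {G : SimpleGraph (Fin n)} [DecidableRel G.Adj]
    {v0 : Fin n} (hstar : StarAt G v0) :
    Nonempty (G ≃g (completeBipartiteGraph (Fin 1) (Fin G.maxDegree) ⊕g
      (⊥ : SimpleGraph (Fin (n - G.maxDegree - 1))))) := by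
  classical
  set Δ := G.maxDegree with hΔdef
  set s := G.neighborFinset v0 with hs
  have hscard : s.card = Δ := by rw [hs, G.card_neighborFinset_eq_degree, hstar.1]
  have hv0s : v0 ∉ s := G.notMem_neighborFinset_self v0
  set t := (insert v0 s)ᶜ with ht
  have htcard : t.card = n - Δ - 1 := by
    rw [ht, Finset.card_compl, Finset.card_insert_of_notMem hv0s, hscard]
    simp only [Fintype.card_fin]
    omega
  set e1 := Finset.equivFinOfCardEq hscard with he1
  set e2 := Finset.equivFinOfCardEq htcard with he2
  have hmemt : ∀ a : Fin n, a ≠ v0 → a ∉ s → a ∈ t := by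
    intro a h1 h2
    rw [ht, Finset.mem_compl, Finset.mem_insert]
    push_neg
    exact ⟨h1, h2⟩
  set f : Fin n → (Fin 1 ⊕ Fin Δ) ⊕ Fin (n - Δ - 1) := fun a =>
    if h : a = v0 then Sum.inl (Sum.inl 0)
    else if h2 : a ∈ s then Sum.inl (Sum.inr (e1 ⟨a, h2⟩))
    else Sum.inr (e2 ⟨a, hmemt a h h2⟩) with hf
  set g : (Fin 1 ⊕ Fin Δ) ⊕ Fin (n - Δ - 1) → Fin n := fun x =>
    match x with
    | Sum.inl (Sum.inl _) => v0
    | Sum.inl (Sum.inr j) => (e1.symm j).1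
    | Sum.inr j => (e2.symm j).1 with hg
  have hsv0 : ∀ (j : Fin Δ), ((e1.symm j : s) : Fin n) ≠ v0 := by
    intro j h
    apply hv0s
    rw [← h]
    exact (e1.symm j).2
  have htv0 : ∀ (j : Fin (n - Δ - 1)), ((e2.symm j : t) : Fin n) ≠ v0 := by
    intro j h
    exact (Finset.mem_compl.mp (e2.symm j).2) (h ▸ Finset.mem_insert_self v0 s)
  have hts : ∀ (j : Fin (n - Δ - 1)), ((e2.symm j : t) : Fin n) ∉ s := by
    intro j h
    exact (Finset.mem_compl.mp (e2.symm j).2) (Finset.mem_insert_of_mem h)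
  have hgf : Function.LeftInverse g f := by
    intro a
    simp only [hf]
    split_ifs with h h2
    · exact h.symm
    · have hr : g (Sum.inl (Sum.inr (e1 ⟨a, h2⟩))) = (e1.symm (e1 ⟨a, h2⟩)).1 := rfl
      rw [hr, Equiv.symm_apply_apply]
    · have hr : g (Sum.inr (e2 ⟨a, hmemt a h h2⟩)) = (e2.symm (e2 ⟨a, hmemt a h h2⟩)).1 := rfl
      rw [hr, Equiv.symm_apply_apply]
  have hfg : Function.RightInverse g f := by
    intro x
    match x with
    | Sum.inl (Sum.inl i) =>
      have hgx : g (Sum.inl (Sum.inl i)) = v0 := rfl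
      rw [hgx]
      simp only [hf]
      rw [dif_pos trivial]
      congr
      exact (Subsingleton.elim 0 i)
    | Sum.inl (Sum.inr j) =>
      have hgx : g (Sum.inl (Sum.inr j)) = (e1.symm j).1 := rfl
      rw [hgx]
      simp only [hf]
      rw [dif_neg (hsv0 j), dif_pos (e1.symm j).2]
      rw [Subtype.coe_eta, Equiv.apply_symm_apply]
    | Sum.inr j =>
      have hgx : g (Sum.inr j) = (e2.symm j).1 := rfl
      rw [hgx]
      simp only [hf]
      rw [dif_neg (htv0 j), dif_neg (hts j)]
      rw [Subtype.coe_eta, Equiv.apply_symm_apply]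
  have hadjchar : ∀ a b, G.Adj a b ↔ ((a = v0 ∧ b ∈ s) ∨ (b = v0 ∧ a ∈ s)) := by
    intro a b
    constructor
    · intro h
      rcases hstar.2 a b h with h1 | h1
      · exact Or.inl ⟨h1, (G.mem_neighborFinset v0 b).mpr (h1 ▸ h)⟩
      · exact Or.inr ⟨h1, (G.mem_neighborFinset v0 a).mpr (h1 ▸ h.symm)⟩
    · rintro (⟨rfl, hb⟩ | ⟨rfl, ha⟩)
      · exact (G.mem_neighborFinset a b).mp hb
      · exact ((G.mem_neighborFinset b a).mp ha).symm
  refine ⟨⟨⟨f, g, hgf, hfg⟩, ?_⟩⟩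
  intro a b
  show (completeBipartiteGraph (Fin 1) (Fin Δ) ⊕g _).Adj (f a) (f b) ↔ G.Adj a b
  rw [hadjchar a b]
  simp only [hf]
  split_ifs with h1 h2 h3 h4 h5 h6 h7 h8 <;>
    (clear hf hg hgf hfg hadjchar hΔdef hs ht he1 he2; simp_all [SimpleGraph.sum_adj])

theorem starAt_of_iso {n : ℕ} {G : SimpleGraph (Fin n)} [DecidableRel G.Adj]
    (φ : G ≃g (completeBipartiteGraph (Fin 1) (Fin G.maxDegree) ⊕g (⊥ : SimpleGraph (Fin (n - G.maxDegree - 1))))) :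
    StarAt G (φ.symm (Sum.inl (Sum.inl 0))) := by
  classical
  have hv0 : φ (φ.symm (Sum.inl (Sum.inl 0))) = Sum.inl (Sum.inl 0) :=
    φ.apply_symm_apply _
  constructor
  · -- degree
    have hcard1 : G.degree (φ.symm (Sum.inl (Sum.inl 0))) =
        Fintype.card (G.neighborSet (φ.symm (Sum.inl (Sum.inl 0)))) :=
      (G.card_neighborSet_eq_degree _).symm
    haveI : Fintype ((completeBipartiteGraph (Fin 1) (Fin G.maxDegree) ⊕g (⊥ : SimpleGraph (Fin (n - G.maxDegree - 1)))).neighborSet (φ (φ.symm (Sum.inl (Sum.inl 0))))) := Fintype.ofFinite _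
    have hcard2 : Fintype.card (G.neighborSet (φ.symm (Sum.inl (Sum.inl 0)))) =
        Fintype.card ((completeBipartiteGraph (Fin 1) (Fin G.maxDegree) ⊕g (⊥ : SimpleGraph (Fin (n - G.maxDegree - 1)))).neighborSet (φ (φ.symm (Sum.inl (Sum.inl 0))))) :=
      Fintype.card_congr (φ.mapNeighborSet _)
    have hmem : ∀ j : Fin G.maxDegree,
        (Sum.inl (Sum.inr j) : (Fin 1 ⊕ Fin G.maxDegree) ⊕ Fin (n - G.maxDegree - 1)) ∈
        (completeBipartiteGraph (Fin 1) (Fin G.maxDegree) ⊕g (⊥ : SimpleGraph (Fin (n - G.maxDegree - 1)))).neighborSet (φ (φ.symm (Sum.inl (Sum.inl 0)))) := by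
      intro j
      rw [SimpleGraph.mem_neighborSet, hv0]
      simp [SimpleGraph.sum_adj]
    have hbij : Function.Bijective (fun j => (⟨Sum.inl (Sum.inr j), hmem j⟩ :
        (completeBipartiteGraph (Fin 1) (Fin G.maxDegree) ⊕g (⊥ : SimpleGraph (Fin (n - G.maxDegree - 1)))).neighborSet (φ (φ.symm (Sum.inl (Sum.inl 0)))))) := by
      constructor
      · intro j k h
        have := congrArg Subtype.val h
        simpa using this
      · rintro ⟨x, hx⟩
        have hadj : (completeBipartiteGraph (Fin 1) (Fin G.maxDegree) ⊕g (⊥ : SimpleGraph (Fin (n - G.maxDegree - 1)))).Adj (Sum.inl (Sum.inl 0)) x := by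
          have := hx
          rwa [SimpleGraph.mem_neighborSet, hv0] at this
        match x with
        | Sum.inl (Sum.inl i) =>
          exfalso
          simp [SimpleGraph.sum_adj] at hadj
        | Sum.inl (Sum.inr j) =>
          exact ⟨j, Subtype.ext rfl⟩
        | Sum.inr j =>
          exfalso
          simp [SimpleGraph.sum_adj] at hadj
    have hcard3 : Fintype.card ((completeBipartiteGraph (Fin 1) (Fin G.maxDegree) ⊕g (⊥ : SimpleGraph (Fin (n - G.maxDegree - 1)))).neighborSet (φ (φ.symm (Sum.inl (Sum.inl 0))))) =
        G.maxDegree :=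
      (Fintype.card_congr (Equiv.ofBijective _ hbij).symm).trans (Fintype.card_fin _)
    rw [hcard1, hcard2, hcard3]
  · intro a b hab
    have hAdj := φ.map_rel_iff.mpr hab
    rcases hpa : φ a with (i | k) | j <;> rcases hpb : φ b with (i' | k') | j' <;>
      rw [hpa, hpb] at hAdj <;>
      first
        | (left
           have h0 : φ a = Sum.inl (Sum.inl 0) := by
             rw [hpa]
             exact congrArg (fun z : Fin 1 =>
               (Sum.inl (Sum.inl z) : (Fin 1 ⊕ Fin G.maxDegree) ⊕ Fin (n - G.maxDegree - 1)))
               (Subsingleton.elim _ _)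
           exact (Equiv.eq_symm_apply φ.toEquiv).mpr h0)
        | (right
           have h0 : φ b = Sum.inl (Sum.inl 0) := by
             rw [hpb]
             exact congrArg (fun z : Fin 1 =>
               (Sum.inl (Sum.inl z) : (Fin 1 ⊕ Fin G.maxDegree) ⊕ Fin (n - G.maxDegree - 1)))
               (Subsingleton.elim _ _)
           exact (Equiv.eq_symm_apply φ.toEquiv).mpr h0)
        | (exfalso; simp [SimpleGraph.sum_adj] at hAdj)
end Aux

theorem stmt10 {n : ℕ} (G : SimpleGraph (Fin n)) [DecidableRel G.Adj]
    (hbip : G.Colorable 2) (hG : G.edgeFinset.Nonempty) :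
    EE G ≥ 2 * Real.cosh (Real.sqrt (G.maxDegree)) + ((n : ℝ) - 2) ∧
    (EE G = 2 * Real.cosh (Real.sqrt (G.maxDegree)) + ((n : ℝ) - 2) ↔
      Nonempty (G ≃g (completeBipartiteGraph (Fin 1) (Fin G.maxDegree) ⊕g
        (⊥ : SimpleGraph (Fin (n - G.maxDegree - 1)))))) := by
  classical
  obtain ⟨hineq, hforce⟩ := main_core G hbip hG
  refine ⟨hineq, ?_, ?_⟩
  · intro h
    obtain ⟨i0, j0, hij, hi, hj, hz⟩ := hforce h
    obtain ⟨v0, hstar⟩ := starAt_of_sum_degree G hG (sum_degree_eq G hij hi hj hz)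
    exact iso_of_starAt hstar
  · rintro ⟨φ⟩
    exact EE_eq_of_starAt hG (starAt_of_iso φ)

end EstradaIndexPaper
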